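/- Let n be a nonnegative integer and let a be a nonzero integer. Then E_n^{(a)} = ∑_{k=0}^{⌊n/2⌋} C(n,2k) (1-a)^{n-2k} a^{2k} E_{2k}, where E_{2k} denotes the Euler numbers. -/

import Mathlib

open Finset

lemma choose_helper (n i k : ℕ) (h : 2*i ≤ n) :
    (n.choose (2*i)) * ((n-2*i).choose (2*k)) = n.choose (2*(i+k)) * ((2*(i+k)).choose (2*k)) := by
  by_cases h2 : 2*(i+k) ≤ n
  · have hm := Nat.choose_mul (n := n) (k := 2*(i+k)) (s := 2*i) (by omega)
    have hsymm : (2*(i+k)).choose (2*k) = (2*(i+k)).choose (2*i) := by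
      rw [← Nat.choose_symm (show 2*k ≤ 2*(i+k) by omega)]
      congr 1; omega
    have hsub : 2*(i+k) - 2*i = 2*k := by omega
    rw [hsub] at hm
    rw [hsymm]
    exact hm.symm
  · have h1 : (n-2*i).choose (2*k) = 0 := Nat.choose_eq_zero_of_lt (by omega)
    have h3 : n.choose (2*(i+k)) = 0 := Nat.choose_eq_zero_of_lt (by omega)
    rw [h1, h3]; ring

lemma key (a : ℤ) (E : ℕ → ℤ) (hE0 : E 0 = 1)
    (hEsum : ∀ n : ℕ, 1 ≤ n →
      ∑ r ∈ Finset.range (n + 1), ((2 * n).choose (2 * r) : ℤ) * E (2 * r) = 0) (n : ℕ) :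
    ∑ i ∈ range (n / 2 + 1), (n.choose (2 * i) : ℤ) * a ^ (2 * i) *
      (∑ k ∈ range ((n - 2 * i) / 2 + 1),
        ((n - 2 * i).choose (2 * k) : ℤ) * (1 - a) ^ (n - 2 * i - 2 * k) * a ^ (2 * k) * E (2 * k))
    = (1 - a) ^ n := by
  set N := n / 2 with hN
  set g : ℕ → ℕ → ℤ := fun k j =>
    (n.choose (2*j) : ℤ) * ((2*j).choose (2*k) : ℤ) * (1-a)^(n-2*j) * a^(2*j) * E (2*k) with hg
  have hgz1 : ∀ k j, j < k → g k j = 0 := by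
    intro k j hjk
    simp only [hg]
    have : (2*j).choose (2*k) = 0 := Nat.choose_eq_zero_of_lt (by omega)
    rw [this]; push_cast; ring
  have hgz2 : ∀ k j, N < j → g k j = 0 := by
    intro k j hj
    simp only [hg]
    have : n.choose (2*j) = 0 := Nat.choose_eq_zero_of_lt (by omega)
    rw [this]; push_cast; ring
  have step1 : ∑ i ∈ range (N + 1), (n.choose (2 * i) : ℤ) * a ^ (2 * i) *
      (∑ k ∈ range ((n - 2 * i) / 2 + 1),
        ((n - 2 * i).choose (2 * k) : ℤ) * (1 - a) ^ (n - 2 * i - 2 * k) * a ^ (2 * k) * E (2 * k))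
      = ∑ i ∈ range (N + 1), ∑ k ∈ range (N + 1), g k (i + k) := by
    refine Finset.sum_congr rfl fun i hi => ?_
    rw [mem_range] at hi
    have h2i : 2 * i ≤ n := by omega
    have hdiv : (n - 2*i)/2 = N - i := by omega
    rw [hdiv, Finset.mul_sum]
    rw [Finset.sum_subset (Finset.range_subset_range.2 (show N - i + 1 ≤ N + 1 by omega))]
    · refine Finset.sum_congr rfl fun k hk => ?_
      simp only [hg]
      have hch := choose_helper n i k h2i
      have he1 : n - 2*i - 2*k = n - 2*(i+k) := by omega
      have he2 : a ^ (2*(i+k)) = a ^ (2*i) * a ^ (2*k) := by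
        rw [← pow_add]; congr 1; omega
      rw [he2, he1]
      have hc : ((n.choose (2*i) : ℤ)) * ((n-2*i).choose (2*k) : ℤ)
          = (n.choose (2*(i+k)) : ℤ) * ((2*(i+k)).choose (2*k) : ℤ) := by
        exact_mod_cast congrArg (Nat.cast : ℕ → ℤ) hch
      linear_combination ((1-a)^(n-2*(i+k)) * a^(2*i) * a^(2*k) * E (2*k)) * hc
    · intro k hk hk2
      rw [mem_range] at hk hk2
      have : (n - 2*i).choose (2*k) = 0 := Nat.choose_eq_zero_of_lt (by omega)
      rw [this]; push_cast; ring
  have step2 : ∀ k, ∑ i ∈ range (N + 1), g k (i + k) = ∑ j ∈ range (N + 1), g k j := by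
    intro k
    have e1 : ∑ i ∈ range (N + 1), g k (i + k) = ∑ j ∈ Ico k (N + 1 + k), g k j := by
      rw [Finset.sum_Ico_eq_sum_range]
      refine Finset.sum_congr (by congr 1; omega) fun i _ => by rw [Nat.add_comm k i]
    rw [e1]
    rw [Finset.sum_subset (show Ico k (N+1+k) ⊆ range (N+1+k) by
      intro x hx; rw [mem_Ico] at hx; exact mem_range.2 hx.2)]
    · rw [← Finset.sum_subset (Finset.range_subset_range.2 (show N + 1 ≤ N + 1 + k by omega))]
      intro j hj hj2
      rw [mem_range] at hj hj2
      exact hgz2 k j (by omega)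
    · intro j hj hj2
      rw [mem_range] at hj
      rw [mem_Ico] at hj2
      exact hgz1 k j (by omega)
  have step3 : ∑ j ∈ range (N + 1), ∑ k ∈ range (N + 1), g k j = (1 - a) ^ n := by
    rw [Finset.sum_eq_single 0]
    · rw [Finset.sum_eq_single 0]
      · simp [hg, hE0]
      · intro k _ hk0
        exact hgz1 k 0 (by omega)
      · intro h0; exact absurd (mem_range.2 (by omega)) h0
    · intro j hj hj0
      rw [mem_range] at hj
      have hshrink : ∑ k ∈ range (N+1), g k j = ∑ k ∈ range (j+1), g k j := by
        symm
        apply Finset.sum_subset (Finset.range_subset_range.2 (by omega))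
        intro k _ hk2
        rw [mem_range] at hk2
        exact hgz1 k j (by omega)
      rw [hshrink]
      have hsum := hEsum j (by omega)
      have : ∑ k ∈ range (j+1), g k j
          = (n.choose (2*j) : ℤ) * (1-a)^(n-2*j) * a^(2*j) *
            ∑ k ∈ range (j+1), ((2*j).choose (2*k) : ℤ) * E (2*k) := by
        rw [Finset.mul_sum]
        exact Finset.sum_congr rfl fun k _ => by simp only [hg]; ring
      rw [this, hsum, mul_zero]
    · intro h0; exact absurd (mem_range.2 (by omega)) h0
  calc ∑ i ∈ range (N + 1), (n.choose (2 * i) : ℤ) * a ^ (2 * i) *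
      (∑ k ∈ range ((n - 2 * i) / 2 + 1),
        ((n - 2 * i).choose (2 * k) : ℤ) * (1 - a) ^ (n - 2 * i - 2 * k) * a ^ (2 * k) * E (2 * k))
      = ∑ i ∈ range (N + 1), ∑ k ∈ range (N + 1), g k (i + k) := step1
    _ = ∑ k ∈ range (N + 1), ∑ i ∈ range (N + 1), g k (i + k) := Finset.sum_comm
    _ = ∑ k ∈ range (N + 1), ∑ j ∈ range (N + 1), g k j :=
        Finset.sum_congr rfl fun k _ => step2 k
    _ = ∑ j ∈ range (N + 1), ∑ k ∈ range (N + 1), g k j := Finset.sum_comm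
    _ = (1 - a) ^ n := step3

/-- Lemma 2.1: `E_n^{(a)} = ∑_{k=0}^{⌊n/2⌋} C(n,2k) (1-a)^{n-2k} a^{2k} E_{2k}`,
where `E_{2k}` are the Euler numbers. -/
theorem stmt_14 (a : ℤ) (ha : a ≠ 0)
    (Ea : ℕ → ℤ)
    (hEa : ∀ n : ℕ, ∑ i ∈ Finset.range (n / 2 + 1),
      (n.choose (2 * i) : ℤ) * a ^ (2 * i) * Ea (n - 2 * i) = (1 - a) ^ n)
    (E : ℕ → ℤ) (hE0 : E 0 = 1)
    (hEodd : ∀ n : ℕ, 1 ≤ n → E (2 * n - 1) = 0)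
    (hEsum : ∀ n : ℕ, 1 ≤ n →
      ∑ r ∈ Finset.range (n + 1), ((2 * n).choose (2 * r) : ℤ) * E (2 * r) = 0)
    (n : ℕ) :
    Ea n = ∑ i ∈ Finset.range (n / 2 + 1),
      (n.choose (2 * i) : ℤ) * (1 - a) ^ (n - 2 * i) * a ^ (2 * i) * E (2 * i) := by
  induction n using Nat.strong_induction_on with
  | _ n ih =>
    have h1 := hEa n
    have h2 := key a E hE0 hEsum n
    rw [Finset.sum_range_succ'] at h1 h2
    simp only [Nat.mul_zero, pow_zero, Nat.choose_zero_right, Nat.cast_one, one_mul, mul_one,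
      Nat.sub_zero] at h1 h2
    have hS : ∀ i ∈ Finset.range (n/2),
        (n.choose (2*(i+1)) : ℤ) * a^(2*(i+1)) * Ea (n - 2*(i+1)) =
        (n.choose (2*(i+1)) : ℤ) * a^(2*(i+1)) *
          (∑ k ∈ Finset.range ((n - 2*(i+1))/2 + 1),
            ((n - 2*(i+1)).choose (2*k) : ℤ) * (1-a)^(n - 2*(i+1) - 2*k) * a^(2*k) * E (2*k)) := by
      intro i hi
      rw [mem_range] at hi
      rw [ih (n - 2*(i+1)) (by omega)]
    have hsum := Finset.sum_congr rfl hS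
    rw [hsum] at h1
    linarith [h1, h2]
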